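/- Fix constants 0 < α₀ < β₀ < 1 and γ > 0, and reals α, β with 0 ≤ α < β ≤ 1, α ≤ β₀ and β ≥ α₀. Let (E_n)_{n∈ℕ} be i.i.d. random variables, each exponentially distributed with mean 1, and define X^{(N)}_n and X̄_N as follows: X^{(N)}_n = (1+γ)·E_n if ⌊α₀N⌋ ≤ n < ⌊β₀N⌋ and X^{(N)}_n = E_n otherwise, and X̄_N = (1/(⌊βN⌋−⌊αN⌋)) Σ_{n=⌊αN⌋}^{⌊βN⌋−1} X^{(N)}_n (for N large enough that ⌊αN⌋ < ⌊βN⌋). Set G_N(α,β) = ((⌊βN⌋−⌊αN⌋)/N)·( m_N − 1 − log m_N ) with m_N = max(X̄_N, 1). Then G_N(α,β) converges almost surely to G(α,β) = (β−α)·( Z(α,β) − 1 − log Z(α,β) ) as N → ∞, where Z(α,β) = 1 + γ·(min(β₀,β) − max(α₀,α))/(β − α). -/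

import Mathlib

open Finset Real MeasureTheory Filter ProbabilityTheory
open scoped NNReal ENNReal Topology

lemma myExpMeasure_withDensity :
    expMeasure 1 = volume.withDensity (fun x => ENNReal.ofReal (exponentialPDFReal 1 x)) := rfl

lemma myExp_pdf_nonneg (x : ℝ) : 0 ≤ exponentialPDFReal 1 x :=
  gammaPDFReal_nonneg zero_lt_one zero_lt_one x

lemma myExp_pdf_eq {x : ℝ} (hx : x ∈ Set.Ioi (0:ℝ)) :
    Real.exp (-x) * x ^ ((2:ℝ) - 1) = x * exponentialPDFReal 1 x := by
  have hx' : (0:ℝ) ≤ x := le_of_lt hx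
  rw [exponentialPDFReal, gammaPDFReal, if_pos hx']
  norm_num [Real.Gamma_one, Real.rpow_one, Real.rpow_zero]
  ring

lemma mySupport (x : ℝ) (hx : x ∉ Set.Ioi (0:ℝ)) : x * exponentialPDFReal 1 x = 0 := by
  simp only [Set.mem_Ioi, not_lt] at hx
  rcases hx.lt_or_eq with h | h
  · rw [exponentialPDFReal, gammaPDFReal, if_neg (not_le.mpr h), mul_zero]
  · rw [h, zero_mul]

lemma myIntegrableOn : IntegrableOn (fun x : ℝ => x * exponentialPDFReal 1 x) (Set.Ioi 0) := by
  refine (Real.GammaIntegral_convergent (by norm_num : (0:ℝ) < 2)).congr_fun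
    (fun x hx => myExp_pdf_eq hx) measurableSet_Ioi

lemma myIntegrable_id : Integrable (fun x : ℝ => x) (expMeasure 1) := by
  rw [myExpMeasure_withDensity,
    integrable_withDensity_iff ((measurable_exponentialPDFReal 1).ennreal_ofReal)
      (Filter.Eventually.of_forall fun x => ENNReal.ofReal_lt_top)]
  simp_rw [ENNReal.toReal_ofReal (myExp_pdf_nonneg _)]
  have : (fun x : ℝ => x * exponentialPDFReal 1 x)
      = Set.indicator (Set.Ioi 0) (fun x => x * exponentialPDFReal 1 x) := by
    refine (Set.indicator_eq_self.2 ?_).symm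
    intro x hx
    by_contra h
    exact hx (mySupport x h)
  rw [this, integrable_indicator_iff measurableSet_Ioi]
  exact myIntegrableOn

lemma myIntegral_id : ∫ x, x ∂(expMeasure 1) = 1 := by
  rw [myExpMeasure_withDensity]
  have h : (fun x : ℝ => ENNReal.ofReal (exponentialPDFReal 1 x))
      = fun x => ((Real.toNNReal (exponentialPDFReal 1 x) : ℝ≥0) : ℝ≥0∞) := rfl
  rw [h, integral_withDensity_eq_integral_smul
    ((measurable_exponentialPDFReal 1).real_toNNReal) (fun x => x)]
  simp_rw [NNReal.smul_def, smul_eq_mul, Real.coe_toNNReal _ (myExp_pdf_nonneg _)]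
  simp_rw [mul_comm (exponentialPDFReal 1 _)]
  rw [← setIntegral_eq_integral_of_forall_compl_eq_zero (s := Set.Ioi 0) mySupport]
  have hc := setIntegral_congr_fun (μ := volume) measurableSet_Ioi
    (fun x hx => myExp_pdf_eq (x := x) hx)
  rw [← hc, ← Real.Gamma_eq_integral (by norm_num : (0:ℝ) < 2)]
  have h2 := Real.Gamma_nat_eq_factorial 1
  norm_num at h2 ⊢

lemma myFloorTendsto (S : ℕ → ℝ) (hS0 : S 0 = 0)
    (hS : Tendsto (fun n : ℕ => S n / n) atTop (𝓝 1)) {c : ℝ} (hc : 0 ≤ c) :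
    Tendsto (fun N : ℕ => S ⌊c * N⌋₊ / N) atTop (𝓝 c) := by
  rcases hc.eq_or_lt with h | h
  · simp only [← h, zero_mul, Nat.floor_zero, hS0, zero_div]
    exact tendsto_const_nhds
  · have h1 : Tendsto (fun N : ℕ => S ⌊c * N⌋₊ / (⌊c * (N:ℝ)⌋₊ : ℝ)) atTop (𝓝 1) :=
      hS.comp (tendsto_nat_floor_mul_atTop c h)
    have h2 : Tendsto (fun N : ℕ => ((⌊c * (N:ℝ)⌋₊ : ℝ)) / N) atTop (𝓝 c) :=
      (tendsto_nat_floor_mul_div_atTop hc).comp tendsto_natCast_atTop_atTop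
    have h3 := h1.mul h2
    rw [one_mul] at h3
    refine h3.congr fun N => ?_
    by_cases hb : (⌊c * (N:ℝ)⌋₊ : ℝ) = 0
    · have hb' : ⌊c * (N:ℝ)⌋₊ = 0 := Nat.cast_eq_zero.mp hb
      simp [hb', hS0]
    · rw [div_mul_div_comm, mul_comm (S _) _, mul_div_mul_left _ _ hb]

lemma myDivDiv (a d n : ℝ) (hn : n ≠ 0) : (a / n) / (d / n) = a / d := by
  by_cases hd : d = 0
  · simp [hd]
  · field_simp

lemma mySum (e : ℕ → ℝ) (γ : ℝ) (a b a0 b0 : ℕ) (hab : a ≤ b) (hmM : max a a0 ≤ min b b0) :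
    ∑ n ∈ Finset.Ico a b, (if a0 ≤ n ∧ n < b0 then (1+γ)*e n else e n)
    = ((∑ i ∈ range b, e i) - ∑ i ∈ range a, e i)
      + γ * ((∑ i ∈ range (min b b0), e i) - ∑ i ∈ range (max a a0), e i) := by
  have h1 : ∀ n ∈ Finset.Ico a b, (if a0 ≤ n ∧ n < b0 then (1+γ)*e n else e n)
      = e n + γ * (if n ∈ Finset.Ico a0 b0 then e n else 0) := by
    intro n _
    simp only [Finset.mem_Ico]
    split_ifs <;> ring
  rw [Finset.sum_congr rfl h1, Finset.sum_add_distrib, ← Finset.mul_sum,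
    Finset.sum_ite_mem, Finset.Ico_inter_Ico, Finset.sum_Ico_eq_sub _ hab,
    Finset.sum_Ico_eq_sub _ hmM]


/-- Almost-sure convergence of the normalized maximized log-likelihood:
`G_N(α,β) = ((⌊βN⌋−⌊αN⌋)/N)·(m_N − 1 − log m_N)` with `m_N = max(X̄_N, 1)` converges
almost surely to `G(α,β) = (β−α)·(Z(α,β) − 1 − log Z(α,β))`. -/
theorem normalized_likelihood_limit
    {Ω : Type*} [MeasurableSpace Ω] (P : Measure Ω) [IsProbabilityMeasure P]
    (α₀ β₀ γ : ℝ) (h0 : 0 < α₀) (h1 : α₀ < β₀) (h2 : β₀ < 1) (hγ : 0 < γ)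
    (α β : ℝ) (hα : 0 ≤ α) (hαβ : α < β) (hβ : β ≤ 1)
    (hαβ₀ : α ≤ β₀) (hβα₀ : α₀ ≤ β)
    (E : ℕ → Ω → ℝ)
    (hmeas : ∀ n, Measurable (E n))
    (hindep : ProbabilityTheory.iIndepFun E P)
    (hdist : ∀ n, Measure.map (E n) P = ProbabilityTheory.expMeasure 1) :
    ∀ᵐ ω ∂P, Filter.Tendsto
      (fun N : ℕ =>
        (((⌊β * N⌋₊ - ⌊α * N⌋₊ : ℕ) : ℝ) / (N : ℝ)) *
          (max ((∑ n ∈ Finset.Ico ⌊α * N⌋₊ ⌊β * N⌋₊,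
              (if ⌊α₀ * N⌋₊ ≤ n ∧ n < ⌊β₀ * N⌋₊ then (1 + γ) * E n ω else E n ω)) /
              ((⌊β * N⌋₊ - ⌊α * N⌋₊ : ℕ) : ℝ)) 1 - 1 -
            Real.log (max ((∑ n ∈ Finset.Ico ⌊α * N⌋₊ ⌊β * N⌋₊,
              (if ⌊α₀ * N⌋₊ ≤ n ∧ n < ⌊β₀ * N⌋₊ then (1 + γ) * E n ω else E n ω)) /
              ((⌊β * N⌋₊ - ⌊α * N⌋₊ : ℕ) : ℝ)) 1)))
      Filter.atTop
      (nhds ((β - α) *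
        ((1 + γ * (min β₀ β - max α₀ α) / (β - α)) - 1 -
          Real.log (1 + γ * (min β₀ β - max α₀ α) / (β - α))))) := by
  have hβpos : 0 < β := lt_of_le_of_lt hα hαβ
  have hbane : β - α ≠ 0 := sub_ne_zero.mpr hαβ.ne'
  have hbapos : 0 < β - α := sub_pos.mpr hαβ
  set Z : ℝ := 1 + γ * (min β₀ β - max α₀ α) / (β - α) with hZdef
  have hmM : max α α₀ ≤ min β β₀ :=
    le_min (max_le hαβ.le hβα₀) (max_le hαβ₀ h1.le)
  have hZ1 : 1 ≤ Z := by
    rw [hZdef]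
    have : 0 ≤ min β₀ β - max α₀ α := by
      rw [min_comm, max_comm]; exact sub_nonneg.mpr hmM
    have := div_nonneg (mul_nonneg hγ.le this) hbapos.le
    linarith
  have hZ0 : Z ≠ 0 := by linarith
  -- SLLN setup
  have hint : Integrable (E 0) P := by
    have h := myIntegrable_id
    rw [← hdist 0] at h
    exact (integrable_map_measure aestronglyMeasurable_id (hmeas 0).aemeasurable).mp h
  have hexp : P[E 0] = 1 := by
    have h : ∫ x, x ∂(Measure.map (E 0) P) = ∫ ω, E 0 ω ∂P :=
      integral_map (hmeas 0).aemeasurable aestronglyMeasurable_id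
    rw [← h, hdist 0, myIntegral_id]
  have hslln := ProbabilityTheory.strong_law_ae_real E hint
    (fun i j hij => hindep.indepFun hij)
    (fun i => ⟨(hmeas i).aemeasurable, (hmeas 0).aemeasurable, by rw [hdist i, hdist 0]⟩)
  rw [hexp] at hslln
  filter_upwards [hslln] with ω hω
  set S : ℕ → ℝ := fun n => ∑ i ∈ Finset.range n, E i ω with hSdef
  have hS0 : S 0 = 0 := by simp [hSdef]
  -- limits of the pieces
  have hA := myFloorTendsto S hS0 hω hβpos.le
  have hB := myFloorTendsto S hS0 hω hα
  have hC := myFloorTendsto S hS0 hω (le_trans hα (le_max_left α α₀))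
  have hD := myFloorTendsto S hS0 hω (le_min hβpos.le (h0.le.trans h1.le) : (0:ℝ) ≤ min β β₀)
  -- floor inequalities
  have hfab : ∀ N : ℕ, ⌊α * (N:ℝ)⌋₊ ≤ ⌊β * (N:ℝ)⌋₊ := fun N =>
    Nat.floor_mono (mul_le_mul_of_nonneg_right hαβ.le (Nat.cast_nonneg N))
  have hfloormax : ∀ N : ℕ, max ⌊α * (N:ℝ)⌋₊ ⌊α₀ * (N:ℝ)⌋₊ = ⌊max α α₀ * (N:ℝ)⌋₊ := by
    intro N
    rw [max_mul_of_nonneg _ _ (Nat.cast_nonneg N : (0:ℝ) ≤ N)]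
    exact (Nat.floor_mono.map_max).symm
  have hfloormin : ∀ N : ℕ, min ⌊β * (N:ℝ)⌋₊ ⌊β₀ * (N:ℝ)⌋₊ = ⌊min β β₀ * (N:ℝ)⌋₊ := by
    intro N
    rw [min_mul_of_nonneg _ _ (Nat.cast_nonneg N : (0:ℝ) ≤ N)]
    exact (Nat.floor_mono.map_min).symm
  have hfmM : ∀ N : ℕ, max ⌊α * (N:ℝ)⌋₊ ⌊α₀ * (N:ℝ)⌋₊ ≤ min ⌊β * (N:ℝ)⌋₊ ⌊β₀ * (N:ℝ)⌋₊ := by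
    intro N
    rw [hfloormax, hfloormin]
    exact Nat.floor_mono (mul_le_mul_of_nonneg_right hmM (Nat.cast_nonneg N))
  -- the numerator sum identity
  have key : ∀ N : ℕ,
      (∑ n ∈ Finset.Ico ⌊α * (N:ℝ)⌋₊ ⌊β * (N:ℝ)⌋₊,
        (if ⌊α₀ * (N:ℝ)⌋₊ ≤ n ∧ n < ⌊β₀ * (N:ℝ)⌋₊ then (1 + γ) * E n ω else E n ω))
      = (S ⌊β * (N:ℝ)⌋₊ - S ⌊α * (N:ℝ)⌋₊)
        + γ * (S ⌊min β β₀ * (N:ℝ)⌋₊ - S ⌊max α α₀ * (N:ℝ)⌋₊) := by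
    intro N
    rw [mySum (fun n => E n ω) γ _ _ _ _ (hfab N) (hfmM N), hfloormin N, hfloormax N]
  -- numerator limit
  have hnum : Tendsto (fun N : ℕ =>
      (∑ n ∈ Finset.Ico ⌊α * (N:ℝ)⌋₊ ⌊β * (N:ℝ)⌋₊,
        (if ⌊α₀ * (N:ℝ)⌋₊ ≤ n ∧ n < ⌊β₀ * (N:ℝ)⌋₊ then (1 + γ) * E n ω else E n ω)) / (N:ℝ))
      atTop (𝓝 ((β - α) + γ * (min β β₀ - max α α₀))) := by
    have h := (hA.sub hB).add ((hD.sub hC).const_mul γ)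
    refine h.congr fun N => ?_
    rw [key N]
    ring
  -- denominator limit
  have hden : Tendsto (fun N : ℕ => ((⌊β * (N:ℝ)⌋₊ - ⌊α * (N:ℝ)⌋₊ : ℕ) : ℝ) / (N:ℝ))
      atTop (𝓝 (β - α)) := by
    have hb' := (tendsto_nat_floor_mul_div_atTop hβpos.le).comp
      (tendsto_natCast_atTop_atTop (R := ℝ))
    have ha' := (tendsto_nat_floor_mul_div_atTop hα).comp
      (tendsto_natCast_atTop_atTop (R := ℝ))
    refine (hb'.sub ha').congr fun N => ?_
    simp only [Function.comp_apply]
    rw [Nat.cast_sub (hfab N), sub_div]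
  -- the sample-mean limit
  have hXbar : Tendsto (fun N : ℕ =>
      (∑ n ∈ Finset.Ico ⌊α * (N:ℝ)⌋₊ ⌊β * (N:ℝ)⌋₊,
        (if ⌊α₀ * (N:ℝ)⌋₊ ≤ n ∧ n < ⌊β₀ * (N:ℝ)⌋₊ then (1 + γ) * E n ω else E n ω)) /
        ((⌊β * (N:ℝ)⌋₊ - ⌊α * (N:ℝ)⌋₊ : ℕ) : ℝ)) atTop (𝓝 Z) := by
    have h := hnum.div hden hbane
    have hZeq : ((β - α) + γ * (min β β₀ - max α α₀)) / (β - α) = Z := by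
      rw [hZdef, min_comm β β₀, max_comm α α₀, add_div, div_self hbane]
    rw [hZeq] at h
    refine h.congr' ?_
    filter_upwards [eventually_ge_atTop 1] with N hN
    exact myDivDiv _ _ _ (Nat.cast_ne_zero.mpr (Nat.one_le_iff_ne_zero.mp hN))
  -- assemble via continuity
  have hmax : Tendsto (fun N : ℕ =>
      max ((∑ n ∈ Finset.Ico ⌊α * (N:ℝ)⌋₊ ⌊β * (N:ℝ)⌋₊,
        (if ⌊α₀ * (N:ℝ)⌋₊ ≤ n ∧ n < ⌊β₀ * (N:ℝ)⌋₊ then (1 + γ) * E n ω else E n ω)) /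
        ((⌊β * (N:ℝ)⌋₊ - ⌊α * (N:ℝ)⌋₊ : ℕ) : ℝ)) 1) atTop (𝓝 Z) := by
    have h := hXbar.max (tendsto_const_nhds (x := (1:ℝ)))
    rwa [max_eq_left hZ1] at h
  have hlog : Tendsto (fun N : ℕ =>
      Real.log (max ((∑ n ∈ Finset.Ico ⌊α * (N:ℝ)⌋₊ ⌊β * (N:ℝ)⌋₊,
        (if ⌊α₀ * (N:ℝ)⌋₊ ≤ n ∧ n < ⌊β₀ * (N:ℝ)⌋₊ then (1 + γ) * E n ω else E n ω)) /
        ((⌊β * (N:ℝ)⌋₊ - ⌊α * (N:ℝ)⌋₊ : ℕ) : ℝ)) 1)) atTop (𝓝 (Real.log Z)) :=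
    (Real.continuousAt_log hZ0).tendsto.comp hmax
  exact hden.mul ((hmax.sub tendsto_const_nhds).sub hlog)
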